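/- Let q be a prime power and let f, g be monic irreducible homogeneous polynomials in F_q[x,y] of the same degree n ≥ 4. If f and g lie in the same orbit under the action of PGL₂(F_q), then Cross(f) = Cross(g). -/

import Mathlib

open MvPolynomial

/-- The dehomogenization `f(x,1)` of a bivariate polynomial. -/
noncomputable def dehom {F : Type*} [CommRing F] (f : MvPolynomial (Fin 2) F) :
    Polynomial F :=
  MvPolynomial.aeval ![Polynomial.X, 1] f

/-- A homogeneous bivariate polynomial of degree `n` is monic if the coefficient of
`x^n` is `1` (equivalently, `f(x,1)` is monic of degree `n`). -/
def MonicHom {F : Type*} [CommRing F] (f : MvPolynomial (Fin 2) F) (n : ℕ) : Prop :=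
  MvPolynomial.coeff (Finsupp.single (0 : Fin 2) n) f = 1

/-- Linear substitution of the variables of a bivariate polynomial by a matrix `N`:
`(substM N f)(v) = f(N·v)`. -/
noncomputable def substM {F : Type*} [Field F]
    (N : Matrix (Fin 2) (Fin 2) F) (f : MvPolynomial (Fin 2) F) :
    MvPolynomial (Fin 2) F :=
  MvPolynomial.aeval (fun i => C (N i 0) * X 0 + C (N i 1) * X 1) f

/-- The cross ratio `χ` of the first four Frobenius conjugates `α, α^q, α^{q²}, α^{q³}`
of `α`. -/
noncomputable def crossRatio {K : Type*} [Field K] (q : ℕ) (α : K) : K :=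
  ((α ^ q ^ 3 - α ^ q) * (α ^ q ^ 2 - α)) /
    ((α ^ q ^ 3 - α) * (α ^ q ^ 2 - α ^ q))

/-- The characteristic polynomial over `F` of an element `χ` of an extension of
degree `n`: the `(n/d)`-th power of the minimal polynomial of `χ`, where `d` is the
degree of the minimal polynomial. -/
noncomputable def charPolyOfElt (F : Type*) [Field F] {K : Type*} [Field K]
    [Algebra F K] (n : ℕ) (χ : K) : Polynomial F :=
  (minpoly F χ) ^ (n / (minpoly F χ).natDegree)

namespace CrossInv

noncomputable def mk2 (i j : ℕ) : Fin 2 →₀ ℕ := Finsupp.single 0 i + Finsupp.single 1 j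

@[simp] lemma mk2_apply0 (i j : ℕ) : mk2 i j 0 = i := by
  simp [mk2, Finsupp.single_apply]

@[simp] lemma mk2_apply1 (i j : ℕ) : mk2 i j 1 = j := by
  simp [mk2, Finsupp.single_apply]

lemma finsupp2_eq (m : Fin 2 →₀ ℕ) : m = mk2 (m 0) (m 1) := by
  ext x
  fin_cases x <;> simp

lemma mk2_single (i : ℕ) : mk2 i 0 = Finsupp.single 0 i := by
  simp [mk2]

variable {F : Type*} [CommRing F]

lemma monomial_eq2 (m : Fin 2 →₀ ℕ) (c : F) :
    (monomial m c : MvPolynomial (Fin 2) F) = C c * X 0 ^ (m 0) * X 1 ^ (m 1) := by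
  rw [monomial_eq, Finsupp.prod_fintype _ _ (fun i => pow_zero _), Fin.prod_univ_two,
    mul_assoc]

lemma sum_fin2 (m : Fin 2 →₀ ℕ) : (m.sum fun _ e => e) = m 0 + m 1 := by
  rw [Finsupp.sum_fintype _ _ (fun _ => rfl), Fin.sum_univ_two]

/-- support characterization for homogeneous polys -/
lemma support_hom {f : MvPolynomial (Fin 2) F} {n : ℕ} (hf : f.IsHomogeneous n)
    {m : Fin 2 →₀ ℕ} (hm : coeff m f ≠ 0) : m 0 ≤ n ∧ m = mk2 (m 0) (n - m 0) := by
  have h := hf hm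
  have hd : m 0 + m 1 = n := by
    rw [← h, show (Finsupp.weight 1 : (Fin 2 →₀ ℕ) →+ ℕ) = Finsupp.weight (fun _ => 1) from rfl,
      ← Finsupp.degree_eq_weight_one, Finsupp.degree_apply,
      ← Fin.sum_univ_two (fun i => m i)]
    exact (Finset.sum_subset (Finset.subset_univ _)
      (fun x _ hx => Finsupp.notMem_support_iff.mp hx)).symm
  constructor
  · omega
  · have : m 1 = n - m 0 := by omega
    rw [← this]; exact finsupp2_eq m

lemma dehom_eq_sum (f : MvPolynomial (Fin 2) F) :
    dehom f = ∑ m ∈ f.support, Polynomial.C (coeff m f) * Polynomial.X ^ (m 0) := by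
  conv_lhs => rw [dehom, ← support_sum_monomial_coeff f]
  rw [map_sum]
  refine Finset.sum_congr rfl fun m _ => ?_
  rw [aeval_monomial, Finsupp.prod_fintype _ _ (fun i => pow_zero _), Fin.prod_univ_two]
  simp [Polynomial.C_eq_algebraMap, mul_assoc]

lemma coeff_dehom {f : MvPolynomial (Fin 2) F} {n : ℕ} (hf : f.IsHomogeneous n)
    {k : ℕ} (hk : k ≤ n) : (dehom f).coeff k = coeff (mk2 k (n - k)) f := by
  rw [dehom_eq_sum, Polynomial.finset_sum_coeff]
  have hterm : ∀ m : Fin 2 →₀ ℕ,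
      (Polynomial.C (coeff m f) * Polynomial.X ^ (m 0)).coeff k
        = if m 0 = k then coeff m f else 0 := by
    intro m
    rw [Polynomial.coeff_C_mul, Polynomial.coeff_X_pow]
    by_cases h : k = m 0 <;> simp [h, eq_comm]
  rw [Finset.sum_congr rfl fun m _ => hterm m]
  by_cases hmem : mk2 k (n - k) ∈ f.support
  · rw [Finset.sum_eq_single_of_mem (mk2 k (n-k)) hmem, if_pos (mk2_apply0 k (n-k))]
    intro m hm hne
    rw [if_neg]
    intro h0
    exact hne (((support_hom hf (mem_support_iff.mp hm)).2).trans (by rw [h0]))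
  · rw [Finset.sum_eq_zero, eq_comm, ← notMem_support_iff.mp hmem]
    intro m hm
    rw [if_neg]
    intro h0
    exact hmem ((((support_hom hf (mem_support_iff.mp hm)).2).trans (by rw [h0])) ▸ hm)

lemma coeff_dehom_gt {f : MvPolynomial (Fin 2) F} {n : ℕ} (hf : f.IsHomogeneous n)
    {k : ℕ} (hk : n < k) : (dehom f).coeff k = 0 := by
  rw [dehom_eq_sum, Polynomial.finset_sum_coeff]
  refine Finset.sum_eq_zero fun m hm => ?_
  have h0 := (support_hom hf (mem_support_iff.mp hm)).1
  rw [Polynomial.coeff_C_mul, Polynomial.coeff_X_pow, if_neg (by omega), mul_zero]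

noncomputable def H (d : ℕ) (p : Polynomial F) : MvPolynomial (Fin 2) F :=
  ∑ i ∈ Finset.range (d+1), monomial (mk2 i (d - i)) (p.coeff i)

lemma coeff_H (d : ℕ) (p : Polynomial F) (m : Fin 2 →₀ ℕ) :
    coeff m (H d p) = if m 0 + m 1 = d ∧ m = mk2 (m 0) (d - m 0) then p.coeff (m 0) else 0 := by
  rw [H, MvPolynomial.coeff_sum]
  by_cases hc : m 0 + m 1 = d ∧ m = mk2 (m 0) (d - m 0)
  · rw [if_pos hc]
    have hm0 : m 0 ∈ Finset.range (d+1) := by simp; omega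
    rw [Finset.sum_eq_single_of_mem (m 0) hm0]
    · rw [coeff_monomial, if_pos hc.2.symm]
    · intro i hi hne
      rw [coeff_monomial, if_neg]
      intro h
      exact hne (by rw [← h, mk2_apply0])
  · rw [if_neg hc]
    refine Finset.sum_eq_zero fun i hi => ?_
    rw [Finset.mem_range] at hi
    rw [coeff_monomial, if_neg]
    intro h
    apply hc
    have h0 : m 0 = i := by rw [← h, mk2_apply0]
    have h1 : m 1 = d - i := by rw [← h, mk2_apply1]
    exact ⟨by omega, by rw [h0]; exact h.symm⟩

lemma eq_H_of_hom {f : MvPolynomial (Fin 2) F} {n : ℕ} (hf : f.IsHomogeneous n) :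
    f = H n (dehom f) := by
  apply MvPolynomial.ext
  intro m
  rw [coeff_H]
  by_cases hc : m 0 + m 1 = n ∧ m = mk2 (m 0) (n - m 0)
  · rw [if_pos hc, coeff_dehom hf (by omega : m 0 ≤ n), ← hc.2]
  · rw [if_neg hc]
    by_contra hne
    have h := support_hom hf hne
    have h1 : m 1 = n - m 0 := by conv_lhs => rw [h.2, mk2_apply1]
    exact hc ⟨by omega, h.2⟩

lemma dehom_H {d : ℕ} {p : Polynomial F} (hp : p.natDegree ≤ d) :
    dehom (H d p) = p := by
  rw [H, dehom, map_sum]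
  have : ∀ i ∈ Finset.range (d+1),
      (MvPolynomial.aeval ![Polynomial.X, (1 : Polynomial F)]) (monomial (mk2 i (d-i)) (p.coeff i))
        = Polynomial.C (p.coeff i) * Polynomial.X ^ i := by
    intro i _
    rw [aeval_monomial, Finsupp.prod_fintype _ _ (fun j => pow_zero _), Fin.prod_univ_two]
    simp [Polynomial.C_eq_algebraMap, mul_assoc]
  rw [Finset.sum_congr rfl this]
  simp_rw [Polynomial.C_mul_X_pow_eq_monomial]
  exact (Polynomial.as_sum_range' p (d+1) (by omega)).symm

section FieldF
variable {F : Type*} [Field F]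

lemma key_frac (d : ℕ) (p : Polynomial F) (hp : p.natDegree ≤ d) :
    algebraMap (MvPolynomial (Fin 2) F) (FractionRing (MvPolynomial (Fin 2) F)) (H d p)
      = (algebraMap (MvPolynomial (Fin 2) F) (FractionRing (MvPolynomial (Fin 2) F))
            ((X 1 : MvPolynomial (Fin 2) F))) ^ d *
        Polynomial.eval₂ ((algebraMap (MvPolynomial (Fin 2) F)
            (FractionRing (MvPolynomial (Fin 2) F))).comp (C : F →+* _))
          (algebraMap (MvPolynomial (Fin 2) F) (FractionRing (MvPolynomial (Fin 2) F))
              (X 0 : MvPolynomial (Fin 2) F) /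
            algebraMap (MvPolynomial (Fin 2) F) (FractionRing (MvPolynomial (Fin 2) F))
              (X 1 : MvPolynomial (Fin 2) F)) p := by
  set R := MvPolynomial (Fin 2) F
  set Fr := FractionRing R
  set j := algebraMap R Fr with hj
  set x := j (X 0)
  set y := j (X 1) with hyy
  have hy : y ≠ 0 := by
    simp only [hyy, hj, ne_eq, map_eq_zero_iff _ (IsFractionRing.injective R Fr)]
    exact MvPolynomial.X_ne_zero 1
  rw [H, map_sum]
  conv_rhs => rw [Polynomial.as_sum_range' p (d+1) (by omega)]
  rw [Polynomial.eval₂_finset_sum, Finset.mul_sum]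
  refine Finset.sum_congr rfl fun i hi => ?_
  rw [Finset.mem_range] at hi
  rw [monomial_eq2, Polynomial.eval₂_monomial]
  simp only [map_mul, map_pow, RingHom.coe_comp, Function.comp_apply]
  rw [mk2_apply0, mk2_apply1]
  rw [div_pow]
  rw [show y ^ d = y ^ (d - i) * y ^ i by rw [← pow_add]; congr 1; omega]
  field_simp
  ring

lemma H_mul {p r : Polynomial F} (hp : p ≠ 0) (hr : r ≠ 0) :
    H (p.natDegree + r.natDegree) (p * r) = H p.natDegree p * H r.natDegree r := by
  apply IsFractionRing.injective (MvPolynomial (Fin 2) F)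
    (FractionRing (MvPolynomial (Fin 2) F))
  rw [map_mul, key_frac _ _ (le_refl _), key_frac _ _ (le_refl _),
    key_frac _ _ (le_of_eq (Polynomial.natDegree_mul hp hr)),
    Polynomial.eval₂_mul]
  ring

lemma dehom_natDegree {f : MvPolynomial (Fin 2) F} {n : ℕ} (hf : f.IsHomogeneous n)
    (hm : MonicHom f n) : (dehom f).natDegree = n ∧ (dehom f).Monic := by
  have hc : (dehom f).coeff n = 1 := by
    rw [coeff_dehom hf (le_refl n), Nat.sub_self, mk2_single]
    exact hm
  have hle : (dehom f).natDegree ≤ n :=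
    Polynomial.natDegree_le_iff_coeff_eq_zero.mpr fun k hk => coeff_dehom_gt hf hk
  have hge : n ≤ (dehom f).natDegree :=
    Polynomial.le_natDegree_of_ne_zero (by rw [hc]; exact one_ne_zero)
  have hdeg : (dehom f).natDegree = n := le_antisymm hle hge
  exact ⟨hdeg, by rwa [Polynomial.Monic, Polynomial.leadingCoeff, hdeg]⟩

lemma dehom_irreducible {f : MvPolynomial (Fin 2) F} {n : ℕ} (hf : f.IsHomogeneous n)
    (hm : MonicHom f n) (hn : 1 ≤ n) (hirr : Irreducible f) : Irreducible (dehom f) := by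
  obtain ⟨hdeg, hmon⟩ := dehom_natDegree hf hm
  constructor
  · exact Polynomial.not_isUnit_of_natDegree_pos _ (by omega)
  · intro u v huv
    have hu : u ≠ 0 := fun h => by simp [h] at huv; exact hmon.ne_zero huv
    have hv : v ≠ 0 := fun h => by simp [h] at huv; exact hmon.ne_zero huv
    have hdsum : u.natDegree + v.natDegree = n := by
      rw [← Polynomial.natDegree_mul hu hv, ← huv, hdeg]
    have hfeq : f = H u.natDegree u * H v.natDegree v := by
      rw [← H_mul hu hv, hdsum, eq_H_of_hom hf, huv]
    rcases hirr.isUnit_or_isUnit hfeq with h | h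
    · left
      have := h.map (MvPolynomial.aeval ![Polynomial.X, (1 : Polynomial F)])
      rwa [show (MvPolynomial.aeval ![Polynomial.X, (1 : Polynomial F)]) (H u.natDegree u)
        = u from dehom_H (le_refl _)] at this
    · right
      have := h.map (MvPolynomial.aeval ![Polynomial.X, (1 : Polynomial F)])
      rwa [show (MvPolynomial.aeval ![Polynomial.X, (1 : Polynomial F)]) (H v.natDegree v)
        = v from dehom_H (le_refl _)] at this

end FieldF

section Eval
variable {F : Type*} [Field F] {K : Type*} [CommRing K] [Algebra F K]

lemma aeval_dehom (f : MvPolynomial (Fin 2) F) (t : K) :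
    Polynomial.aeval t (dehom f) = MvPolynomial.aeval ![t, 1] f := by
  rw [dehom]
  rw [show (Polynomial.aeval t) ((MvPolynomial.aeval ![Polynomial.X, 1]) f)
      = ((Polynomial.aeval t).comp (MvPolynomial.aeval ![Polynomial.X, 1])) f from rfl,
    MvPolynomial.comp_aeval]
  have hfun : (fun i : Fin 2 => Polynomial.aeval t ((![Polynomial.X, (1 : Polynomial F)]) i)) = ![t, (1:K)] := by
    funext i; fin_cases i <;> simp
  rw [hfun]

lemma eval_H (d : ℕ) (p : Polynomial F) (u w : K) :
    MvPolynomial.aeval ![u, w] (H d p)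
      = ∑ i ∈ Finset.range (d+1), algebraMap F K (p.coeff i) * (u ^ i * w ^ (d - i)) := by
  rw [H, map_sum]
  refine Finset.sum_congr rfl fun i _ => ?_
  rw [aeval_monomial, Finsupp.prod_fintype _ _ (fun j => pow_zero _), Fin.prod_univ_two,
    mk2_apply0, mk2_apply1]
  simp [mul_assoc]

lemma eval_scale {f : MvPolynomial (Fin 2) F} {n : ℕ} (hf : f.IsHomogeneous n)
    (c u w : K) :
    MvPolynomial.aeval ![c * u, c * w] f = c ^ n * MvPolynomial.aeval ![u, w] f := by
  conv_lhs => rw [eq_H_of_hom hf]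
  conv_rhs => rw [eq_H_of_hom hf]
  rw [eval_H, eval_H, Finset.mul_sum]
  refine Finset.sum_congr rfl fun i hi => ?_
  rw [Finset.mem_range] at hi
  have hcc : c ^ i * c ^ (n - i) = c ^ n := by rw [← pow_add]; congr 1; omega
  rw [mul_pow, mul_pow, ← hcc]
  ring

lemma eval_x0 {f : MvPolynomial (Fin 2) F} {n : ℕ} (hf : f.IsHomogeneous n)
    (hm : MonicHom f n) (t : K) :
    MvPolynomial.aeval ![t, (0 : K)] f = t ^ n := by
  conv_lhs => rw [eq_H_of_hom hf]
  rw [eval_H]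
  rw [Finset.sum_eq_single_of_mem n (by simp)]
  · rw [Nat.sub_self, pow_zero, mul_one, show (dehom f).coeff n = 1 from by
      rw [coeff_dehom hf (le_refl n), Nat.sub_self, mk2_single]; exact hm, map_one, one_mul]
  · intro i hi hne
    rw [Finset.mem_range] at hi
    rw [zero_pow (by omega : n - i ≠ 0), mul_zero, mul_zero]

lemma aeval_substM (N : Matrix (Fin 2) (Fin 2) F) (f : MvPolynomial (Fin 2) F)
    (u w : K) :
    MvPolynomial.aeval ![u, w] (substM N f)
      = MvPolynomial.aeval
          ![algebraMap F K (N 0 0) * u + algebraMap F K (N 0 1) * w,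
            algebraMap F K (N 1 0) * u + algebraMap F K (N 1 1) * w] f := by
  rw [substM]
  rw [show (MvPolynomial.aeval ![u, w])
        ((MvPolynomial.aeval fun i => C (N i 0) * X 0 + C (N i 1) * X 1) f)
      = ((MvPolynomial.aeval ![u, w]).comp
          (MvPolynomial.aeval fun i => C (N i 0) * X 0 + C (N i 1) * X 1)) f from rfl,
    MvPolynomial.comp_aeval]
  have hfun : (fun i => (MvPolynomial.aeval ![u, w]) (C (N i 0) * X 0 + C (N i 1) * X 1))
      = ![algebraMap F K (N 0 0) * u + algebraMap F K (N 0 1) * w,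
          algebraMap F K (N 1 0) * u + algebraMap F K (N 1 1) * w] := by
    funext i; fin_cases i <;> simp [algebraMap_eq]
  rw [hfun]

end Eval

section FF
variable {F : Type*} [Field F] [Fintype F] {K : Type*} [Field K] [Algebra F K]

lemma exists_frobAlg (q : ℕ) (hq : Fintype.card F = q) (m : ℕ) :
    ∃ ψ : K →ₐ[F] K, ∀ x : K, ψ x = x ^ q ^ m := by
  set p := ringChar F with hp
  haveI hfact : Fact p.Prime := ⟨CharP.char_is_prime F p⟩
  obtain ⟨k, hkp, hcard⟩ := FiniteField.card F p
  haveI : CharP K p := charP_of_injective_algebraMap (algebraMap F K).injective p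
  haveI : ExpChar K p := ExpChar.prime hfact.out
  have hcomm : ∀ (c : F) (x : K),
      iterateFrobenius K p (k * m) (c • x) = c • iterateFrobenius K p (k * m) x := by
    intro c x
    rw [Algebra.smul_def, Algebra.smul_def, map_mul]
    congr 1
    rw [iterateFrobenius_def, ← map_pow]
    congr 1
    rw [pow_mul, ← hcard, FiniteField.pow_card_pow]
  refine ⟨AlgHom.mk' (iterateFrobenius K p (k * m)) hcomm, fun x => ?_⟩
  show iterateFrobenius K p (k * m) x = x ^ q ^ m
  rw [iterateFrobenius_def, pow_mul, ← hcard, hq]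


lemma conj_ne (q : ℕ) (hq : Fintype.card F = q) {γ : K} (hint : IsIntegral F γ)
    {m : ℕ} (hm1 : 1 ≤ m) (hmn : m < (minpoly F γ).natDegree) : γ ^ q ^ m ≠ γ := by
  intro heq
  have hq2 : 1 < q := hq ▸ Fintype.one_lt_card
  obtain ⟨ψ, hψ⟩ := exists_frobAlg (K := K) q hq m
  -- every element of F⟮γ⟯ is fixed by x ↦ x^(q^m)
  have hfix : ∀ x ∈ Algebra.adjoin F ({γ} : Set K), x ^ q ^ m = x := by
    intro x hx
    have : ψ x = x := by
      induction hx using Algebra.adjoin_induction with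
      | mem y hy => rw [Set.mem_singleton_iff] at hy; rw [hy, hψ, heq]
      | algebraMap r => exact ψ.commutes r
      | add a b _ _ ha hb => rw [map_add, ha, hb]
      | mul a b _ _ ha hb => rw [map_mul, ha, hb]
    rw [← hψ, this]
  set E := IntermediateField.adjoin F ({γ} : Set K) with hE
  haveI : FiniteDimensional F E := IntermediateField.adjoin.finiteDimensional hint
  haveI : Finite E := Module.finite_of_finite F
  haveI : Fintype E := Fintype.ofFinite E
  have hcardE : Fintype.card E = q ^ Module.finrank F E := by
    rw [← hq]; exact Module.card_eq_pow_finrank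
  have hrank : Module.finrank F E = (minpoly F γ).natDegree :=
    IntermediateField.adjoin.finrank hint
  -- E embeds into the roots of X^(q^m) - X
  set P : Polynomial K := Polynomial.X ^ q ^ m - Polynomial.X with hP
  have hPne : P ≠ 0 := FiniteField.X_pow_card_pow_sub_X_ne_zero K (by omega) hq2
  have hPdeg : P.natDegree = q ^ m :=
    FiniteField.X_pow_card_pow_sub_X_natDegree_eq K (by omega) hq2
  classical
  have hmem : ∀ x : E, (x : K) ∈ P.roots.toFinset := by
    intro x
    rw [Multiset.mem_toFinset, Polynomial.mem_roots hPne]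
    have hxmem : (x : K) ∈ Algebra.adjoin F ({γ} : Set K) := by
      rw [← IntermediateField.adjoin_simple_toSubalgebra_of_isAlgebraic hint.isAlgebraic]
      exact x.2
    simp only [hP, Polynomial.IsRoot, Polynomial.eval_sub, Polynomial.eval_pow,
      Polynomial.eval_X]
    rw [hfix _ hxmem, sub_self]
  have hcardle : Fintype.card E ≤ q ^ m := by
    calc Fintype.card E = Finset.univ.card := (Finset.card_univ (α := E)).symm
    _ ≤ P.roots.toFinset.card := Finset.card_le_card_of_injOn (fun x => (x : K))
        (fun x _ => hmem x) (fun a _ b _ h => Subtype.coe_injective h)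
    _ ≤ Multiset.card P.roots := Multiset.toFinset_card_le _
    _ ≤ P.natDegree := Polynomial.card_roots' P
    _ = q ^ m := hPdeg
  rw [hcardE, hrank] at hcardle
  exact absurd hcardle (not_le.mpr (Nat.pow_lt_pow_right hq2 hmn))

end FF

lemma cr_moebius {K : Type*} [Field K] (A B C D : K) (hdet : A * D - B * C ≠ 0)
    (b0 b1 b2 b3 : K)
    (h0 : C * b0 + D ≠ 0) (h1 : C * b1 + D ≠ 0) (h2 : C * b2 + D ≠ 0) (h3 : C * b3 + D ≠ 0)
    (h30 : (A * b3 + B) / (C * b3 + D) ≠ (A * b0 + B) / (C * b0 + D))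
    (h21 : (A * b2 + B) / (C * b2 + D) ≠ (A * b1 + B) / (C * b1 + D)) :
    (((A * b3 + B) / (C * b3 + D) - (A * b1 + B) / (C * b1 + D)) *
        ((A * b2 + B) / (C * b2 + D) - (A * b0 + B) / (C * b0 + D))) /
      (((A * b3 + B) / (C * b3 + D) - (A * b0 + B) / (C * b0 + D)) *
        ((A * b2 + B) / (C * b2 + D) - (A * b1 + B) / (C * b1 + D)))
      = ((b3 - b1) * (b2 - b0)) / ((b3 - b0) * (b2 - b1)) := by
  have diff : ∀ x y : K, C * x + D ≠ 0 → C * y + D ≠ 0 →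
      (A * x + B) / (C * x + D) - (A * y + B) / (C * y + D)
        = ((A * D - B * C) * (x - y)) / ((C * x + D) * (C * y + D)) := by
    intro x y hx hy
    rw [div_sub_div _ _ hx hy]
    ring
  have hb30 : b3 - b0 ≠ 0 := by
    intro h
    exact h30 (by rw [sub_eq_zero] at h; rw [h])
  have hb21 : b2 - b1 ≠ 0 := by
    intro h
    exact h21 (by rw [sub_eq_zero] at h; rw [h])
  rw [diff b3 b1 h3 h1, diff b2 b0 h2 h0, diff b3 b0 h3 h0, diff b2 b1 h2 h1]
  field_simp

lemma map_crossRatio {K1 K2 : Type*} [Field K1] [Field K2] (ψ : K1 →+* K2) (q : ℕ) (x : K1) :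
    ψ (((x ^ q ^ 3 - x ^ q) * (x ^ q ^ 2 - x)) / ((x ^ q ^ 3 - x) * (x ^ q ^ 2 - x ^ q)))
      = ((ψ x ^ q ^ 3 - ψ x ^ q) * (ψ x ^ q ^ 2 - ψ x)) /
          ((ψ x ^ q ^ 3 - ψ x) * (ψ x ^ q ^ 2 - ψ x ^ q)) := by
  rw [map_div₀]
  push_cast [map_mul, map_sub, map_pow]
  rfl

end CrossInv

/-- Let `q` be a prime power, `F` the field with `q` elements, and `f, g` monic
irreducible homogeneous bivariate polynomials over `F` of the same degree `n ≥ 4`.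
If `f` and `g` lie in the same `PGL₂(F)`-orbit (i.e. some `g` is a scalar multiple of
`f(dx−by, −cx+ay)` for an invertible matrix `[[a,b],[c,d]]`, the substitution being
given by the adjugate matrix), then `Cross(f) = Cross(g)`: for any roots `α` of
`f(x,1)` and `β` of `g(x,1)` in an algebraic closure `K` of `F`, the characteristic
polynomials over `F` of the cross ratios of their Frobenius conjugates agree. -/
theorem cross_polynomial_invariant
    {F : Type*} [Field F] [Fintype F] (q : ℕ) (hq : Fintype.card F = q)
    {K : Type*} [Field K] [Algebra F K] [IsAlgClosure F K]
    (n : ℕ) (hn : 4 ≤ n)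
    (f g : MvPolynomial (Fin 2) F)
    (hfhom : f.IsHomogeneous n) (hghom : g.IsHomogeneous n)
    (hfmonic : MonicHom f n) (hgmonic : MonicHom g n)
    (hfirr : Irreducible f) (hgirr : Irreducible g)
    (horbit : ∃ M : GL (Fin 2) F, ∃ e : Fˣ,
      substM (Matrix.adjugate (M : Matrix (Fin 2) (Fin 2) F)) f = (e : F) • g)
    (α β : K)
    (hα : Polynomial.aeval α (dehom f) = 0)
    (hβ : Polynomial.aeval β (dehom g) = 0) :
    charPolyOfElt F n (crossRatio q α) = charPolyOfElt F n (crossRatio q β) := by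

  classical
  obtain ⟨M, e, horb⟩ := horbit
  set N : Matrix (Fin 2) (Fin 2) F := Matrix.adjugate (M : Matrix (Fin 2) (Fin 2) F) with hN
  set p0 : Polynomial F := dehom f with hp0
  obtain ⟨hp0deg, hp0mon⟩ := CrossInv.dehom_natDegree hfhom hfmonic
  have hp0irr : Irreducible p0 := CrossInv.dehom_irreducible hfhom hfmonic (by omega) hfirr
  have hdetN : N.det ≠ 0 := by
    have hM : IsUnit (M : Matrix (Fin 2) (Fin 2) F).det :=
      (Matrix.isUnit_iff_isUnit_det _).mp M.isUnit
    rw [hN, Matrix.det_adjugate]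
    simpa using hM.ne_zero
  set A : K := algebraMap F K (N 0 0) with hA
  set Bc : K := algebraMap F K (N 0 1) with hB
  set Cc : K := algebraMap F K (N 1 0) with hC
  set Dc : K := algebraMap F K (N 1 1) with hD
  have hdetK : A * Dc - Bc * Cc ≠ 0 := by
    have heq : A * Dc - Bc * Cc = algebraMap F K N.det := by
      rw [Matrix.det_fin_two, map_sub, map_mul, map_mul]
    rw [heq]
    simpa using hdetN
  have key : ∀ γ : K, Polynomial.aeval γ (dehom g) = 0 →
      Cc * γ + Dc ≠ 0 ∧ Polynomial.aeval ((A * γ + Bc) / (Cc * γ + Dc)) (dehom f) = 0 := by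
    intro γ hγ
    have h1 : MvPolynomial.aeval ![γ, (1:K)] (substM N f) = 0 := by
      rw [horb, map_smul, ← CrossInv.aeval_dehom, hγ, smul_zero]
    rw [CrossInv.aeval_substM] at h1
    rw [mul_one, mul_one] at h1
    have hden : Cc * γ + Dc ≠ 0 := by
      intro hd
      rw [hd, CrossInv.eval_x0 hfhom hfmonic] at h1
      have hnum : A * γ + Bc = 0 := pow_eq_zero_iff (by omega : n ≠ 0) |>.mp h1
      apply hdetK
      have hrw : A * Dc - Bc * Cc = A * (Cc * γ + Dc) - Cc * (A * γ + Bc) := by ring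
      rw [hrw, hd, hnum, mul_zero, mul_zero, sub_zero]
    refine ⟨hden, ?_⟩
    rw [CrossInv.aeval_dehom]
    have hscale := CrossInv.eval_scale hfhom (Cc * γ + Dc) ((A * γ + Bc) / (Cc * γ + Dc)) 1
    rw [mul_one, mul_div_cancel₀ _ hden] at hscale
    rcases mul_eq_zero.mp (hscale.symm.trans h1) with h | h
    · exact absurd h (pow_ne_zero _ hden)
    · exact h
  have hψ : ∀ m : ℕ, ∃ ψ : K →ₐ[F] K, ∀ x, ψ x = x ^ q ^ m := fun m =>
    CrossInv.exists_frobAlg q hq m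
  set α' : K := (A * β + Bc) / (Cc * β + Dc) with hα'
  obtain ⟨hden0, hroot0⟩ := key β hβ
  have hmoeb : ∀ ψ : K →ₐ[F] K, ψ α' = (A * ψ β + Bc) / (Cc * ψ β + Dc) := by
    intro ψ
    rw [hα', map_div₀, map_add, map_add, map_mul, map_mul, hA, hB, hC, hD,
      ψ.commutes, ψ.commutes, ψ.commutes, ψ.commutes]
  have hα'int : IsIntegral F α' := ⟨p0, hp0mon, hroot0⟩
  have hα'min : minpoly F α' = p0 := (minpoly.eq_of_irreducible_of_monic hp0irr hroot0 hp0mon).symm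
  have hconj : ∀ m, 1 ≤ m → m ≤ 3 → α' ^ q ^ m ≠ α' := by
    intro m hm1 hm3
    exact CrossInv.conj_ne q hq hα'int hm1 (by rw [hα'min, hp0deg]; omega)
  have hne : ∀ i j : ℕ, i < j → j ≤ 3 → α' ^ q ^ j ≠ α' ^ q ^ i := by
    intro i j hij hj3 hcontra
    obtain ⟨ψ, hψi⟩ := hψ i
    apply hconj (j - i) (by omega) (by omega)
    apply ψ.toRingHom.injective
    show ψ (α' ^ q ^ (j - i)) = ψ α'
    rw [hψi, hψi, ← pow_mul, ← pow_add, (by omega : j - i + i = j)]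
    exact hcontra
  -- the four Frobenius conjugates of β and the corresponding Möbius images
  obtain ⟨ψ1, hψ1⟩ := hψ 1
  obtain ⟨ψ2, hψ2⟩ := hψ 2
  obtain ⟨ψ3, hψ3⟩ := hψ 3
  have hβroot : ∀ ψ : K →ₐ[F] K, Polynomial.aeval (ψ β) (dehom g) = 0 := fun ψ => by
    rw [Polynomial.aeval_algHom_apply, hβ, map_zero]
  have e1 : α' ^ q ^ 1 = (A * β ^ q ^ 1 + Bc) / (Cc * β ^ q ^ 1 + Dc) := by
    rw [← hψ1 α', ← hψ1 β, hmoeb ψ1]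
  have e2 : α' ^ q ^ 2 = (A * β ^ q ^ 2 + Bc) / (Cc * β ^ q ^ 2 + Dc) := by
    rw [← hψ2 α', ← hψ2 β, hmoeb ψ2]
  have e3 : α' ^ q ^ 3 = (A * β ^ q ^ 3 + Bc) / (Cc * β ^ q ^ 3 + Dc) := by
    rw [← hψ3 α', ← hψ3 β, hmoeb ψ3]
  have d1 : Cc * β ^ q ^ 1 + Dc ≠ 0 := by
    have := (key (ψ1 β) (hβroot ψ1)).1
    rwa [hψ1 β] at this
  have d2 : Cc * β ^ q ^ 2 + Dc ≠ 0 := by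
    have := (key (ψ2 β) (hβroot ψ2)).1
    rwa [hψ2 β] at this
  have d3 : Cc * β ^ q ^ 3 + Dc ≠ 0 := by
    have := (key (ψ3 β) (hβroot ψ3)).1
    rwa [hψ3 β] at this
  have hcr : crossRatio q α' = crossRatio q β := by
    rw [crossRatio, crossRatio]
    rw [show (α' : K) ^ q = α' ^ q ^ 1 by rw [pow_one], show (β : K) ^ q = β ^ q ^ 1 by
      rw [pow_one], e1, e2, e3, hα']
    refine CrossInv.cr_moebius A Bc Cc Dc hdetK β (β ^ q ^ 1) (β ^ q ^ 2) (β ^ q ^ 3)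
      hden0 d1 d2 d3 ?_ ?_
    · rw [← e3, ← hα']
      have := hne 0 3 (by omega) (by omega)
      rwa [pow_zero, pow_one] at this
    · rw [← e2, ← e1]
      exact hne 1 2 (by omega) (by omega)
  haveI : Fact (Irreducible p0) := ⟨hp0irr⟩
  have hp0α : Polynomial.aeval α p0 = 0 := hα
  let φa : AdjoinRoot p0 →ₐ[F] K := AdjoinRoot.liftAlgHom p0 (Algebra.ofId F K) α hp0α
  let φb : AdjoinRoot p0 →ₐ[F] K := AdjoinRoot.liftAlgHom p0 (Algebra.ofId F K) α' hroot0
  have hφa : φa (crossRatio q (AdjoinRoot.root p0)) = crossRatio q α := by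
    rw [crossRatio, crossRatio, ← AdjoinRoot.liftAlgHom_root (p := p0) (i := Algebra.ofId F K) (x := α) (h := hp0α)]
    exact CrossInv.map_crossRatio (φa : AdjoinRoot p0 →+* K) q _
  have hφb : φb (crossRatio q (AdjoinRoot.root p0)) = crossRatio q α' := by
    rw [crossRatio, crossRatio, ← AdjoinRoot.liftAlgHom_root (p := p0) (i := Algebra.ofId F K) (x := α') (h := hroot0)]
    exact CrossInv.map_crossRatio (φb : AdjoinRoot p0 →+* K) q _
  have hmin : minpoly F (crossRatio q α) = minpoly F (crossRatio q β) := by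
    rw [← hcr, ← hφa, ← hφb,
      minpoly.algHom_eq φa (RingHom.injective (φa : AdjoinRoot p0 →+* K)),
      minpoly.algHom_eq φb (RingHom.injective (φb : AdjoinRoot p0 →+* K))]
  rw [charPolyOfElt, charPolyOfElt, hmin]
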